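/- arXiv:2207.12832 — 4 statements merged into one kernel-verified Lean document; each statement's English description precedes it below -/
import Mathlib

section
/- Let γ_Z > 1, b ≥ 0, τ_Z > b, e_Z > 0, and let r(τ) be the internal energy along the Hugoniot shock curve through (τ_Z, e_Z) for the covolume EOS (as in the extended Riemann problem). Define ς(τ) := r(τ)(τ - b)^{γ_Z - 1} on (τ_Z^∞, τ_Z], where τ_Z^∞ = ((γ_Z-1)τ_Z + 2b)/(γ_Z+1). Then for every γ ∈ (1, γ_Z] and every c ∈ (0, e_Z(τ_Z - b)^{γ-1}], the function g(τ) := τ^{-1} r(τ) - c τ^{-1}(τ - b)^{1-γ} is nonnegative and decreasing on (τ_Z^∞, τ_Z], given that ς is decreasing on this interval. -/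
/-- Given that `ς(τ) = r(τ)(τ-b)^{γZ-1}` is decreasing on `(τZ∞, τZ]`,
the surrogate-entropy function `g(τ) = τ⁻¹ r(τ) - c τ⁻¹ (τ-b)^{1-γ}` is
nonnegative and decreasing on `(τZ∞, τZ]` for every `γ ∈ (1, γZ]` and
`c ∈ (0, eZ (τZ-b)^{γ-1}]`. -/
theorem stmt2 (γZ b τZ eZ : ℝ) (hγZ : 1 < γZ) (hb : 0 ≤ b) (hτ : b < τZ)
    (he : 0 < eZ)
    (r : ℝ → ℝ)
    (hr : ∀ τ, r τ = eZ * (1 - (γZ - 1) * (τ - τZ) / (2 * (τZ - b))) /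
      (1 + (γZ - 1) * (τ - τZ) / (2 * (τ - b))))
    (τZinf : ℝ) (hinf : τZinf = ((γZ - 1) * τZ + 2 * b) / (γZ + 1))
    (ς : ℝ → ℝ) (hς : ∀ τ, ς τ = r τ * (τ - b) ^ (γZ - 1))
    (hanti : AntitoneOn ς (Set.Ioc τZinf τZ))
    (γ c : ℝ) (hγ : γ ∈ Set.Ioc 1 γZ)
    (hc : c ∈ Set.Ioc 0 (eZ * (τZ - b) ^ (γ - 1)))
    (g : ℝ → ℝ)
    (hg : ∀ τ, g τ = τ⁻¹ * r τ - c * τ⁻¹ * (τ - b) ^ (1 - γ)) :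
    (∀ τ ∈ Set.Ioc τZinf τZ, 0 ≤ g τ) ∧
    AntitoneOn g (Set.Ioc τZinf τZ) := by
  obtain ⟨hγ1, hγ2⟩ := hγ
  obtain ⟨hc0, hc1⟩ := hc
  have hτZb : (0:ℝ) < τZ - b := by linarith
  have hbinf : b < τZinf := by
    rw [hinf, lt_div_iff₀ (by linarith : (0:ℝ) < γZ + 1)]; nlinarith
  have hinfτZ : τZinf < τZ := by
    rw [hinf, div_lt_iff₀ (by linarith : (0:ℝ) < γZ + 1)]; nlinarith
  -- basic facts about points of the interval
  have hbτ : ∀ τ ∈ Set.Ioc τZinf τZ, b < τ := fun τ hm => lt_trans hbinf hm.1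
  have hpos : ∀ τ ∈ Set.Ioc τZinf τZ, 0 < τ := fun τ hm => lt_of_le_of_lt hb (hbτ τ hm)
  have hτZmem : τZ ∈ Set.Ioc τZinf τZ := ⟨hinfτZ, le_refl _⟩
  have hrτZ : r τZ = eZ := by rw [hr]; simp
  have hςτZ : ς τZ = eZ * (τZ - b) ^ (γZ - 1) := by rw [hς, hrτZ]
  have hςlb : ∀ τ ∈ Set.Ioc τZinf τZ, eZ * (τZ - b) ^ (γZ - 1) ≤ ς τ := by
    intro τ hm
    rw [← hςτZ]
    exact hanti hm hτZmem hm.2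
  have hςpos : ∀ τ ∈ Set.Ioc τZinf τZ, 0 < ς τ := by
    intro τ hm
    exact lt_of_lt_of_le (by positivity) (hςlb τ hm)
  -- the two factors
  set A : ℝ → ℝ := fun τ => τ⁻¹ * (τ - b) ^ (1 - γ) with hA
  set B : ℝ → ℝ := fun τ => ς τ * (τ - b) ^ (γ - γZ) - c with hB
  have hAnn : ∀ τ ∈ Set.Ioc τZinf τZ, 0 ≤ A τ := by
    intro τ hm
    have h1 := hpos τ hm
    have h2 : (0:ℝ) < τ - b := by have := hbτ τ hm; linarith
    positivity
  have hBnn : ∀ τ ∈ Set.Ioc τZinf τZ, 0 ≤ B τ := by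
    intro τ hm
    have h2 : (0:ℝ) < τ - b := by have := hbτ τ hm; linarith
    have key : eZ * (τZ - b) ^ (γ - 1) ≤ ς τ * (τ - b) ^ (γ - γZ) := by
      have e1 : (τZ - b) ^ (γ - 1) = (τZ - b) ^ (γZ - 1) * (τZ - b) ^ (γ - γZ) := by
        rw [← Real.rpow_add hτZb]; ring_nf
      have h3 : (τZ - b) ^ (γ - γZ) ≤ (τ - b) ^ (γ - γZ) :=
        Real.rpow_le_rpow_of_nonpos h2 (by have := hm.2; linarith) (by linarith)
      calc eZ * (τZ - b) ^ (γ - 1)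
          = (eZ * (τZ - b) ^ (γZ - 1)) * (τZ - b) ^ (γ - γZ) := by rw [e1]; ring
        _ ≤ ς τ * (τ - b) ^ (γ - γZ) := by
            apply mul_le_mul (hςlb τ hm) h3 (by positivity)
            exact le_of_lt (hςpos τ hm)
    simp only [hB]
    linarith
  have hAanti : ∀ x ∈ Set.Ioc τZinf τZ, ∀ y ∈ Set.Ioc τZinf τZ, x ≤ y → A y ≤ A x := by
    intro x hx y hy hxy
    have hx0 := hpos x hx
    have hxb : (0:ℝ) < x - b := by have := hbτ x hx; linarith
    have hyb : (0:ℝ) < y - b := by linarith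
    apply mul_le_mul (by rw [inv_le_inv₀ (lt_of_lt_of_le hx0 hxy) hx0]; exact hxy)
      (Real.rpow_le_rpow_of_nonpos hxb (by linarith) (by linarith))
      (by positivity) (by positivity)
  have hBanti : ∀ x ∈ Set.Ioc τZinf τZ, ∀ y ∈ Set.Ioc τZinf τZ, x ≤ y → B y ≤ B x := by
    intro x hx y hy hxy
    have hxb : (0:ℝ) < x - b := by have := hbτ x hx; linarith
    simp only [hB]
    have h1 : ς y ≤ ς x := hanti hx hy hxy
    have h2 : (y - b) ^ (γ - γZ) ≤ (x - b) ^ (γ - γZ) :=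
      Real.rpow_le_rpow_of_nonpos hxb (by linarith) (by linarith)
    have h3 : (0:ℝ) ≤ (y - b) ^ (γ - γZ) := by
      have : (0:ℝ) < y - b := by linarith
      positivity
    have := mul_le_mul h1 h2 h3 (le_of_lt (hςpos x hx))
    linarith
  -- the factorization g = A * B
  have hfac : ∀ τ ∈ Set.Ioc τZinf τZ, g τ = A τ * B τ := by
    intro τ hm
    have h2 : (0:ℝ) < τ - b := by have := hbτ τ hm; linarith
    have e2 : (τ - b) ^ (1 - γ) * (τ - b) ^ (γ - 1) = 1 := by
      rw [← Real.rpow_add h2]; norm_num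
    have e3 : (τ - b) ^ (γZ - 1) * (τ - b) ^ (γ - γZ) = (τ - b) ^ (γ - 1) := by
      rw [← Real.rpow_add h2]; ring_nf
    simp only [hA, hB, hς, hg]
    linear_combination (-(τ⁻¹ * r τ)) * e2 - (τ⁻¹ * r τ * (τ - b) ^ (1 - γ)) * e3
  constructor
  · intro τ hm
    rw [hfac τ hm]
    exact mul_nonneg (hAnn τ hm) (hBnn τ hm)
  · intro x hx y hy hxy
    rw [hfac x hx, hfac y hy]
    exact mul_le_mul (hAanti x hx y hy hxy) (hBanti x hx y hy hxy) (hBnn y hy) (hAnn x hx)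
end

section
/- Fix γ > 1, b ≥ 0, and c ≥ 0. The function Ψ defined on the set B(b) = {(ρ, m, E) ∈ ℝ^{d+2} : 0 < ρ, 1 - bρ > 0} by Ψ(ρ, m, E) := (E - ‖m‖²/(2ρ)) - c ρ^γ (1 - bρ)^{1-γ} is concave. -/
open Real Set

private lemma pos_comb {p q a a' : ℝ} (hp : 0 < p) (hq : 0 < q) (ha : 0 ≤ a)
    (ha' : 0 ≤ a') (hab : a + a' = 1) : 0 < a * p + a' * q := by
  rcases eq_or_lt_of_le ha with h | h
  · have : a' = 1 := by linarith
    subst this; simp [← h, hq]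
  · nlinarith [mul_nonneg ha' hq.le, mul_pos h hp]

private lemma rw_persp {ρ s : ℝ} (hρ : 0 ≤ ρ) (hs : 0 < s) (γ : ℝ) :
    s * (ρ / s) ^ γ = ρ ^ γ * s ^ (1 - γ) := by
  rw [Real.div_rpow hρ hs.le, Real.rpow_sub hs, Real.rpow_one]
  field_simp

private lemma aux_kin {x y ρ1 ρ2 a a' : ℝ} (h1 : 0 < ρ1) (h2 : 0 < ρ2)
    (ha : 0 ≤ a) (ha' : 0 ≤ a') (hab : a + a' = 1) :
    (a * x + a' * y) ^ 2 / (2 * (a * ρ1 + a' * ρ2)) ≤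
      a * (x ^ 2 / (2 * ρ1)) + a' * (y ^ 2 / (2 * ρ2)) := by
  have hρ : 0 < a * ρ1 + a' * ρ2 := pos_comb h1 h2 ha ha' hab
  have hR : a * (x ^ 2 / (2 * ρ1)) + a' * (y ^ 2 / (2 * ρ2)) =
      (a * x ^ 2 * ρ2 + a' * y ^ 2 * ρ1) / (2 * (ρ1 * ρ2)) := by
    field_simp
  rw [hR, div_le_div_iff₀ (by positivity) (by positivity)]
  nlinarith [mul_nonneg (mul_nonneg ha ha') (sq_nonneg (x * ρ2 - y * ρ1))]

private lemma aux_phi {γ b ρ1 ρ2 a a' : ℝ} (hγ : 1 < γ)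
    (h1 : 0 < ρ1) (hs1 : 0 < 1 - b * ρ1) (h2 : 0 < ρ2) (hs2 : 0 < 1 - b * ρ2)
    (ha : 0 ≤ a) (ha' : 0 ≤ a') (hab : a + a' = 1) :
    (a * ρ1 + a' * ρ2) ^ γ * (1 - b * (a * ρ1 + a' * ρ2)) ^ (1 - γ) ≤
      a * (ρ1 ^ γ * (1 - b * ρ1) ^ (1 - γ)) + a' * (ρ2 ^ γ * (1 - b * ρ2) ^ (1 - γ)) := by
  set s1 := 1 - b * ρ1 with hs1def
  set s2 := 1 - b * ρ2 with hs2def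
  have hρ : 0 < a * ρ1 + a' * ρ2 := pos_comb h1 h2 ha ha' hab
  have e : 1 - b * (a * ρ1 + a' * ρ2) = a * s1 + a' * s2 := by
    rw [hs1def, hs2def]; linear_combination -hab
  have hs : 0 < 1 - b * (a * ρ1 + a' * ρ2) := by
    rw [e]; exact pos_comb hs1 hs2 ha ha' hab
  set s := 1 - b * (a * ρ1 + a' * ρ2) with hsdef
  have hl1 : 0 ≤ a * s1 / s := div_nonneg (mul_nonneg ha hs1.le) hs.le
  have hl2 : 0 ≤ a' * s2 / s := div_nonneg (mul_nonneg ha' hs2.le) hs.le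
  have hsum : a * s1 / s + a' * s2 / s = 1 := by
    rw [← add_div, div_eq_one_iff_eq hs.ne']; linarith [e]
  have ht1 : ρ1 / s1 ∈ Ici (0:ℝ) := div_nonneg h1.le hs1.le
  have ht2 : ρ2 / s2 ∈ Ici (0:ℝ) := div_nonneg h2.le hs2.le
  have key := (convexOn_rpow hγ.le).2 ht1 ht2 hl1 hl2 hsum
  simp only [smul_eq_mul] at key
  have harg : a * s1 / s * (ρ1 / s1) + a' * s2 / s * (ρ2 / s2) = (a * ρ1 + a' * ρ2) / s := by
    field_simp
  rw [harg] at key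
  have hmul := mul_le_mul_of_nonneg_left key hs.le
  calc (a * ρ1 + a' * ρ2) ^ γ * s ^ (1 - γ)
      = s * ((a * ρ1 + a' * ρ2) / s) ^ γ := (rw_persp hρ.le hs γ).symm
    _ ≤ s * (a * s1 / s * (ρ1 / s1) ^ γ + a' * s2 / s * (ρ2 / s2) ^ γ) := hmul
    _ = a * (s1 * (ρ1 / s1) ^ γ) + a' * (s2 * (ρ2 / s2) ^ γ) := by
        field_simp
    _ = a * (ρ1 ^ γ * s1 ^ (1 - γ)) + a' * (ρ2 ^ γ * s2 ^ (1 - γ)) := by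
        rw [rw_persp h1.le hs1 γ, rw_persp h2.le hs2 γ]

/-- The surrogate entropy functional
`Ψ(ρ,m,E) = (E - ‖m‖²/(2ρ)) - c ρ^γ (1-bρ)^{1-γ}` is concave on the
admissible set `B(b) = {(ρ,m,E) : 0 < ρ, 1 - bρ > 0}`. -/
theorem stmt3 (d : ℕ) (γ b c : ℝ) (hγ : 1 < γ) (hb : 0 ≤ b) (hc : 0 ≤ c) :
    ConcaveOn ℝ
      {u : ℝ × EuclideanSpace ℝ (Fin d) × ℝ | 0 < u.1 ∧ 0 < 1 - b * u.1}
      (fun u => (u.2.2 - ‖u.2.1‖ ^ 2 / (2 * u.1)) -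
        c * u.1 ^ γ * (1 - b * u.1) ^ (1 - γ)) := by
  constructor
  · intro x hx y hy a a' ha ha' hab
    simp only [Set.mem_setOf_eq, Prod.fst_add, Prod.smul_fst, smul_eq_mul] at *
    constructor
    · exact pos_comb hx.1 hy.1 ha ha' hab
    · have e : 1 - b * (a * x.1 + a' * y.1)
          = a * (1 - b * x.1) + a' * (1 - b * y.1) := by linear_combination -hab
      rw [e]; exact pos_comb hx.2 hy.2 ha ha' hab
  · intro x hx y hy a a' ha ha' hab
    simp only [Set.mem_setOf_eq] at hx hy
    simp only [Prod.fst_add, Prod.snd_add, Prod.smul_fst, Prod.smul_snd, smul_eq_mul]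
    have hρ : 0 < a * x.1 + a' * y.1 := pos_comb hx.1 hy.1 ha ha' hab
    -- kinetic part
    have hnorm : ‖a • x.2.1 + a' • y.2.1‖ ≤ a * ‖x.2.1‖ + a' * ‖y.2.1‖ := by
      calc ‖a • x.2.1 + a' • y.2.1‖ ≤ ‖a • x.2.1‖ + ‖a' • y.2.1‖ := norm_add_le _ _
        _ = a * ‖x.2.1‖ + a' * ‖y.2.1‖ := by
            rw [norm_smul, norm_smul, Real.norm_of_nonneg ha, Real.norm_of_nonneg ha']
    have hK : ‖a • x.2.1 + a' • y.2.1‖ ^ 2 / (2 * (a * x.1 + a' * y.1)) ≤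
        a * (‖x.2.1‖ ^ 2 / (2 * x.1)) + a' * (‖y.2.1‖ ^ 2 / (2 * y.1)) := by
      refine le_trans ?_ (aux_kin hx.1 hy.1 ha ha' hab (x := ‖x.2.1‖) (y := ‖y.2.1‖))
      have hsq : ‖a • x.2.1 + a' • y.2.1‖ ^ 2 ≤ (a * ‖x.2.1‖ + a' * ‖y.2.1‖) ^ 2 :=
        pow_le_pow_left₀ (norm_nonneg _) hnorm 2
      have hd : (0:ℝ) < 2 * (a * x.1 + a' * y.1) := by linarith
      exact div_le_div_of_nonneg_right hsq hd.le
    have hP := aux_phi hγ hx.1 hx.2 hy.1 hy.2 ha ha' hab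
    have hP' := mul_le_mul_of_nonneg_left hP hc
    nlinarith [hK, hP']
end

section
/- Let d ≥ 1, b ≥ 0, γ > 1, c real. Define Φ on A(b) := {(ρ, m, E) ∈ ℝ^{d+2} : 0 < ρ < 1/b} by Φ(ρ, m, E) := ρE - ‖m‖²/2 - c ρ^{γ+1}(1 - bρ)^{1-γ}. Let u ∈ A(b), p = (ρ_p, m_p, E_p) ∈ ℝ^{d+2}, and ℓ₀ > 0 with u + ℓ₀ p ∈ A(b). Then the function f(ℓ) := Φ(u + ℓ p) satisfies f'''(ℓ) = ρ_p³ · (-c γ(γ²-1) ρ(ℓ)^{γ-2}(1 - bρ(ℓ))^{-γ-2}) where ρ(ℓ) is the density of u + ℓp; in particular, if c ≥ 0, the sign of f''' is constant on [0, ℓ₀] (it equals the sign of -ρ_p when c > 0, γ > 1), so f'' is monotone on [0, ℓ₀]. -/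
open Real RealInnerProductSpace

private lemma rpow_shift {x : ℝ} (hx : 0 < x) {e₁ e₂ : ℝ} (n : ℕ) (h : e₁ = e₂ + n) :
    x ^ e₁ = x ^ e₂ * x ^ n := by
  rw [h, Real.rpow_add hx, Real.rpow_natCast]

private lemma hasDerivAt_P (a q b e₁ e₂ x : ℝ) (h1 : 0 < a + x * q)
    (h2 : 0 < 1 - b * (a + x * q)) :
    HasDerivAt (fun ℓ => (a + ℓ * q) ^ e₁ * (1 - b * (a + ℓ * q)) ^ e₂)
      (q * e₁ * ((a + x * q) ^ (e₁ - 1) * (1 - b * (a + x * q)) ^ e₂)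
        - b * q * e₂ * ((a + x * q) ^ e₁ * (1 - b * (a + x * q)) ^ (e₂ - 1))) x := by
  have hl : HasDerivAt (fun ℓ : ℝ => a + ℓ * q) q x := by
    simpa using ((hasDerivAt_id x).mul_const q).const_add a
  have hl' : HasDerivAt (fun ℓ : ℝ => 1 - b * (a + ℓ * q)) (-(b * q)) x := by
    simpa using (hl.const_mul b).const_sub 1
  have hA := hl.rpow_const (p := e₁) (Or.inl h1.ne')
  have hB := hl'.rpow_const (p := e₂) (Or.inl h2.ne')
  have h := hA.mul hB
  refine h.congr_deriv ?_
  ring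

/-- The third derivative of `f(ℓ) = Φ(u + ℓp)` with
`Φ(ρ,m,E) = ρE - ‖m‖²/2 - c ρ^{γ+1}(1-bρ)^{1-γ}` equals
`ρ_p³ ∂ρ³Φ(u+ℓp)`; in particular, if `c ≥ 0` the sign of `f'''` is constant
on `[0,ℓ₀]`, so `f''` is monotone there. -/
theorem stmt5 (d : ℕ) (b γ c : ℝ) (hd : 1 ≤ d) (hb : 0 ≤ b) (hγ : 1 < γ)
    (Φ : ℝ × EuclideanSpace ℝ (Fin d) × ℝ → ℝ)
    (hΦ : ∀ v : ℝ × EuclideanSpace ℝ (Fin d) × ℝ,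
      Φ v = v.1 * v.2.2 - ‖v.2.1‖ ^ 2 / 2 -
        c * v.1 ^ (γ + 1) * (1 - b * v.1) ^ (1 - γ))
    (u p : ℝ × EuclideanSpace ℝ (Fin d) × ℝ) (ℓ₀ : ℝ) (hℓ₀ : 0 < ℓ₀)
    (hu : 0 < u.1 ∧ b * u.1 < 1)
    (hup : 0 < (u + ℓ₀ • p).1 ∧ b * (u + ℓ₀ • p).1 < 1)
    (f : ℝ → ℝ) (hf : ∀ ℓ, f ℓ = Φ (u + ℓ • p)) :
    (∀ ℓ ∈ Set.Icc 0 ℓ₀,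
      iteratedDeriv 3 f ℓ = p.1 ^ 3 *
        (-(c * γ * (γ ^ 2 - 1)) * ((u + ℓ • p).1) ^ (γ - 2) *
          (1 - b * (u + ℓ • p).1) ^ (-γ - 2))) ∧
    (0 ≤ c →
      MonotoneOn (iteratedDeriv 2 f) (Set.Icc 0 ℓ₀) ∨
      AntitoneOn (iteratedDeriv 2 f) (Set.Icc 0 ℓ₀)) := by
  obtain ⟨hu1, hu2⟩ := hu
  obtain ⟨hup1, hup2⟩ := hup
  have hfst : ∀ ℓ : ℝ, (u + ℓ • p).1 = u.1 + ℓ * p.1 := fun ℓ => rfl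
  have hsnd2 : ∀ ℓ : ℝ, (u + ℓ • p).2.2 = u.2.2 + ℓ * p.2.2 := fun ℓ => rfl
  have hsnd1 : ∀ ℓ : ℝ, (u + ℓ • p).2.1 = u.2.1 + ℓ • p.2.1 := fun ℓ => rfl
  set a := u.1 with ha
  set q := p.1 with hqdef
  set Q₁ : ℝ := q * u.2.2 + a * p.2.2 - (inner ℝ u.2.1 p.2.1 : ℝ) with hQ₁
  set Q₂ : ℝ := q * p.2.2 - ‖p.2.1‖ ^ 2 / 2 with hQ₂
  rw [hfst ℓ₀] at hup1 hup2
  clear_value a q Q₁ Q₂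
  have hr0 : 0 < 1 - b * a := by linarith
  have hrℓ₀ : 0 < 1 - b * (a + ℓ₀ * q) := by linarith
  -- membership of the interval in the good set
  have hmem : ∀ ℓ ∈ Set.Icc (0:ℝ) ℓ₀, 0 < a + ℓ * q ∧ 0 < 1 - b * (a + ℓ * q) := by
    rintro ℓ ⟨h0, h1⟩
    have key : ∀ A B : ℝ, 0 < A → 0 < B → 0 < (ℓ₀ - ℓ) * A + ℓ * B := by
      intro A B hA hB
      rcases eq_or_lt_of_le h0 with h | h
      · rw [← h]; nlinarith
      · nlinarith [mul_nonneg (sub_nonneg.2 h1) hA.le, mul_pos h hB]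
    constructor
    · nlinarith [key a (a + ℓ₀ * q) hu1 hup1]
    · nlinarith [key (1 - b * a) (1 - b * (a + ℓ₀ * q)) hr0 hrℓ₀]
  set S : Set ℝ := {ℓ | 0 < a + ℓ * q} ∩ {ℓ | 0 < 1 - b * (a + ℓ * q)} with hSdef
  have hSopen : IsOpen S :=
    (isOpen_lt continuous_const (by fun_prop)).inter
      (isOpen_lt continuous_const (by fun_prop))
  have hIccS : Set.Icc (0:ℝ) ℓ₀ ⊆ S := fun ℓ hℓ => ⟨(hmem ℓ hℓ).1, (hmem ℓ hℓ).2⟩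
  have hSmem : ∀ x, x ∈ S ↔ 0 < a + x * q ∧ 0 < 1 - b * (a + x * q) := fun x => Iff.rfl
  clear_value S
  set F1 : ℝ → ℝ := fun ℓ => Q₁ + ℓ * (2 * Q₂)
      - c * ((q * (γ + 1)) * ((a + ℓ * q) ^ γ * (1 - b * (a + ℓ * q)) ^ (1 - γ))
           + (b * q * (γ - 1)) * ((a + ℓ * q) ^ (γ + 1) * (1 - b * (a + ℓ * q)) ^ (-γ)))
      with hF1def
  set F2 : ℝ → ℝ := fun ℓ =>
      2 * Q₂ - c * ((q ^ 2 * (γ * (γ + 1))) * ((a + ℓ * q) ^ (γ - 1) * (1 - b * (a + ℓ * q)) ^ (1 - γ))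
        + (q ^ 2 * (2 * b * (γ ^ 2 - 1))) * ((a + ℓ * q) ^ γ * (1 - b * (a + ℓ * q)) ^ (-γ))
        + (q ^ 2 * (b ^ 2 * γ * (γ - 1))) * ((a + ℓ * q) ^ (γ + 1) * (1 - b * (a + ℓ * q)) ^ (-γ - 1)))
      with hF2def
  set F3 : ℝ → ℝ := fun ℓ => q ^ 3 *
      (-(c * γ * (γ ^ 2 - 1)) * (a + ℓ * q) ^ (γ - 2) * (1 - b * (a + ℓ * q)) ^ (-γ - 2))
      with hF3def
  clear_value F1 F2 F3
  -- first derivative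
  have hstep1 : ∀ x ∈ S, HasDerivAt f (F1 x) x := by
    intro x hx
    obtain ⟨hx1, hx2⟩ := (hSmem x).1 hx
    have h1 : HasDerivAt (fun ℓ : ℝ => (a * u.2.2 - ‖u.2.1‖ ^ 2 / 2) + ℓ * Q₁) Q₁ x := by
      simpa using ((hasDerivAt_id x).mul_const Q₁).const_add (a * u.2.2 - ‖u.2.1‖ ^ 2 / 2)
    have h2 : HasDerivAt (fun ℓ : ℝ => ℓ ^ 2 * Q₂) (2 * x * Q₂) x := by
      have := (hasDerivAt_pow 2 x).mul_const Q₂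
      norm_num at this
      convert this using 1 <;> ring
    have hpoly := h1.add h2
    have hP := (hasDerivAt_P a q b (γ + 1) (1 - γ) x hx1 hx2).const_mul c
    have hcomb := hpoly.sub hP
    have hfun : f = fun ℓ => ((a * u.2.2 - ‖u.2.1‖ ^ 2 / 2) + ℓ * Q₁ + ℓ ^ 2 * Q₂)
        - c * ((a + ℓ * q) ^ (γ + 1) * (1 - b * (a + ℓ * q)) ^ (1 - γ)) := by
      funext ℓ
      rw [hf, hΦ, hfst ℓ, hsnd2 ℓ, hsnd1 ℓ, norm_add_sq_real, real_inner_smul_right,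
        norm_smul]
      simp only [Real.norm_eq_abs, mul_pow, sq_abs, hQ₁, hQ₂]
      ring
    rw [hfun]
    refine hcomb.congr_deriv ?_
    rw [hF1def]
    simp only
    rw [show γ + 1 - 1 = γ by ring, show 1 - γ - 1 = -γ by ring]
    ring
  -- second derivative
  have hstep2 : ∀ x ∈ S, HasDerivAt F1 (F2 x) x := by
    intro x hx
    obtain ⟨hx1, hx2⟩ := (hSmem x).1 hx
    have hP1 := (hasDerivAt_P a q b γ (1 - γ) x hx1 hx2).const_mul (q * (γ + 1))
    have hP2 := (hasDerivAt_P a q b (γ + 1) (-γ) x hx1 hx2).const_mul (b * q * (γ - 1))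
    have hlin : HasDerivAt (fun ℓ : ℝ => Q₁ + ℓ * (2 * Q₂)) (2 * Q₂) x := by
      simpa using ((hasDerivAt_id x).mul_const (2 * Q₂)).const_add Q₁
    have hcomb := hlin.sub ((hP1.add hP2).const_mul c)
    rw [hF1def, hF2def]
    refine hcomb.congr_deriv ?_
    simp only
    rw [show γ + 1 - 1 = γ by ring, show 1 - γ - 1 = -γ by ring,
      show -γ - 1 = -γ - 1 by ring]
    ring
  -- third derivative
  have hstep3 : ∀ x ∈ S, HasDerivAt F2 (F3 x) x := by
    intro x hx
    obtain ⟨hx1, hx2⟩ := (hSmem x).1 hx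
    have hP1 := (hasDerivAt_P a q b (γ - 1) (1 - γ) x hx1 hx2).const_mul (q ^ 2 * (γ * (γ + 1)))
    have hP2 := (hasDerivAt_P a q b γ (-γ) x hx1 hx2).const_mul (q ^ 2 * (2 * b * (γ ^ 2 - 1)))
    have hP3 := (hasDerivAt_P a q b (γ + 1) (-γ - 1) x hx1 hx2).const_mul
      (q ^ 2 * (b ^ 2 * γ * (γ - 1)))
    have hcomb := (((hP1.add hP2).add hP3).const_mul c).const_sub (2 * Q₂)
    rw [hF2def, hF3def]
    refine hcomb.congr_deriv ?_
    simp only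
    rw [show γ - 1 - 1 = γ - 2 by ring, show (1:ℝ) - γ - 1 = -γ by ring,
      show γ + 1 - 1 = γ by ring, show -γ - 1 - 1 = -γ - 2 by ring]
    rw [rpow_shift hx1 1 (show γ - 1 = γ - 2 + (1:ℕ) by push_cast; ring),
      rpow_shift hx1 2 (show γ = γ - 2 + (2:ℕ) by push_cast; ring),
      rpow_shift hx1 3 (show γ + 1 = γ - 2 + (3:ℕ) by push_cast; ring),
      rpow_shift hx2 2 (show -γ = -γ - 2 + (2:ℕ) by push_cast; ring),
      rpow_shift hx2 1 (show -γ - 1 = -γ - 2 + (1:ℕ) by push_cast; ring),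
      rpow_shift hx2 3 (show 1 - γ = -γ - 2 + (3:ℕ) by push_cast; ring)]
    ring
  -- deriv equalities
  have hd1 : Set.EqOn (deriv f) F1 S := fun y hy => (hstep1 y hy).deriv
  have hd2 : Set.EqOn (deriv (deriv f)) F2 S := by
    intro y hy
    have heq : deriv f =ᶠ[nhds y] F1 :=
      Filter.eventuallyEq_of_mem (hSopen.mem_nhds hy) hd1
    rw [heq.deriv_eq, (hstep2 y hy).deriv]
  have hD3 : ∀ y ∈ S, HasDerivAt (deriv (deriv f)) (F3 y) y := by
    intro y hy
    have heq : deriv (deriv f) =ᶠ[nhds y] F2 :=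
      Filter.eventuallyEq_of_mem (hSopen.mem_nhds hy) hd2
    exact (hstep3 y hy).congr_of_eventuallyEq heq
  have hd3 : ∀ y ∈ S, deriv (deriv (deriv f)) y = F3 y := fun y hy => (hD3 y hy).deriv
  have hit3 : iteratedDeriv 3 f = deriv (deriv (deriv f)) := by
    rw [show (3:ℕ) = 2 + 1 from rfl, iteratedDeriv_succ,
      show (2:ℕ) = 1 + 1 from rfl, iteratedDeriv_succ, iteratedDeriv_one]
  have hit2 : iteratedDeriv 2 f = deriv (deriv f) := by
    rw [show (2:ℕ) = 1 + 1 from rfl, iteratedDeriv_succ, iteratedDeriv_one]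
  constructor
  · intro ℓ hℓ
    rw [hit3, hd3 ℓ (hIccS hℓ), hfst ℓ, hF3def]
  · intro hc
    have hK : ∀ y ∈ S, (0 ≤ q → F3 y ≤ 0) ∧ (q ≤ 0 → 0 ≤ F3 y) := by
      intro y hy
      obtain ⟨hy1, hy2⟩ := (hSmem y).1 hy
      have hA := Real.rpow_pos_of_pos hy1 (γ - 2)
      have hB := Real.rpow_pos_of_pos hy2 (-γ - 2)
      have hKpos : 0 ≤ c * γ * (γ ^ 2 - 1) := by
        have h1 : 0 < γ * (γ ^ 2 - 1) := by
          nlinarith [mul_pos (mul_pos (show (0:ℝ) < γ - 1 by linarith)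
            (show (0:ℝ) < γ + 1 by linarith)) (show (0:ℝ) < γ by linarith)]
        nlinarith [mul_nonneg hc h1.le]
      rw [hF3def]
      simp only
      have hprod : 0 ≤ c * γ * (γ ^ 2 - 1) *
          ((a + y * q) ^ (γ - 2) * (1 - b * (a + y * q)) ^ (-γ - 2)) :=
        mul_nonneg hKpos (mul_nonneg hA.le hB.le)
      constructor
      · intro hq0
        have hmm := mul_nonneg (pow_nonneg hq0 3) hprod
        linarith only [hmm]
      · intro hq0
        have h3 : q ^ 3 ≤ 0 := Odd.pow_nonpos ⟨1, by norm_num⟩ hq0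
        have hmm := mul_nonneg (neg_nonneg.2 h3) hprod
        linarith only [hmm]
    rw [hit2]
    have hconv : Convex ℝ (Set.Icc (0:ℝ) ℓ₀) := convex_Icc _ _
    have hcont : ContinuousOn (deriv (deriv f)) (Set.Icc 0 ℓ₀) :=
      fun y hy => ((hD3 y (hIccS hy)).continuousAt).continuousWithinAt
    have hdiff : DifferentiableOn ℝ (deriv (deriv f)) (interior (Set.Icc (0:ℝ) ℓ₀)) :=
      fun y hy => ((hD3 y (hIccS (interior_subset hy))).differentiableAt).differentiableWithinAt
    rcases le_or_gt 0 q with hq0 | hq0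
    · right
      apply antitoneOn_of_deriv_nonpos hconv hcont hdiff
      intro y hy
      rw [(hD3 y (hIccS (interior_subset hy))).deriv]
      exact (hK y (hIccS (interior_subset hy))).1 hq0
    · left
      apply monotoneOn_of_deriv_nonneg hconv hcont hdiff
      intro y hy
      rw [(hD3 y (hIccS (interior_subset hy))).deriv]
      exact (hK y (hIccS (interior_subset hy))).2 hq0.le
end

section
/- Let m_i > 0, let {d_{ij}}_{j ∈ I\{i\}} be nonnegative reals, let τ > 0 satisfy τ·Σ_{j∈I\{i\}} 2d_{ij}/m_i ≤ 1, and let U_i, {U_j}, and flux values be given with d_{ij} > 0. Define Ū_{ij} := ½(U_i + U_j) - (1/(2d_{ij}))(f(U_j) - f(U_i))·c_{ij} where Σ_{j∈I} c_{ij} = 0. Then the update U_i^{new} := U_i - (τ/m_i)[Σ_{j∈I} f(U_j)·c_{ij} - Σ_{j∈I\{i\}} d_{ij}(U_j - U_i)] satisfies U_i^{new} = (1 - Σ_{j∈I\{i\}} 2τd_{ij}/m_i)·U_i + Σ_{j∈I\{i\}} (2τd_{ij}/m_i)·Ū_{ij}; in particular U_i^{new} is a convex combination of U_i and the bar states {Ū_{ij}}.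 -/
/-- The first-order graph-viscosity update is a convex combination of the local
state `U i` and the bar states `Ū_{ij}`: the algebraic identity
`U_i^{new} = (1 - Σ 2τd_{ij}/m_i) U_i + Σ (2τd_{ij}/m_i) Ū_{ij}`, with all
coefficients nonnegative under the CFL condition. -/
theorem stmt15 {V : Type*} [AddCommGroup V] [Module ℝ V]
    {ι : Type*} [DecidableEq ι] (dd : ℕ)
    (I : Finset ι) (i : ι) (hi : i ∈ I)
    (m τ : ℝ) (hm : 0 < m) (hτ : 0 < τ)
    (d : ι → ℝ) (hd : ∀ j ∈ I.erase i, 0 < d j)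
    (hCFL : τ * ∑ j ∈ I.erase i, 2 * d j / m ≤ 1)
    (U : ι → V) (f : V → (Fin dd → ℝ) →ₗ[ℝ] V) (c : ι → Fin dd → ℝ)
    (hc : ∑ j ∈ I, c j = 0)
    (Ubar : ι → V)
    (hUbar : ∀ j ∈ I.erase i, Ubar j =
      (1 / 2 : ℝ) • (U i + U j) -
        (1 / (2 * d j)) • (f (U j) (c j) - f (U i) (c j)))
    (Unew : V)
    (hUnew : Unew = U i - (τ / m) •
      (∑ j ∈ I, f (U j) (c j) - ∑ j ∈ I.erase i, d j • (U j - U i))) :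
    Unew = (1 - ∑ j ∈ I.erase i, 2 * τ * d j / m) • U i +
      ∑ j ∈ I.erase i, (2 * τ * d j / m) • Ubar j ∧
    0 ≤ 1 - ∑ j ∈ I.erase i, 2 * τ * d j / m ∧
    ∀ j ∈ I.erase i, 0 ≤ 2 * τ * d j / m := by
  have hm0 : m ≠ 0 := hm.ne'
  refine ⟨?_, ?_, ?_⟩
  · -- main identity
    have hFsum : ∑ j ∈ I, f (U j) (c j)
        = ∑ j ∈ I.erase i, (f (U j) (c j) - f (U i) (c j)) := by
      have h0 : ∑ j ∈ I, f (U i) (c j) = 0 := by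
        rw [← map_sum, hc, map_zero]
      rw [show (∑ j ∈ I.erase i, (f (U j) (c j) - f (U i) (c j)))
            = ∑ j ∈ I, (f (U j) (c j) - f (U i) (c j)) from
          Finset.sum_erase I (by simp)]
      rw [Finset.sum_sub_distrib, h0, sub_zero]
    have hterm : ∀ j ∈ I.erase i, (2 * τ * d j / m) • Ubar j
        = (τ * d j / m) • U i + (τ * d j / m) • U j
          - (τ / m) • (f (U j) (c j) - f (U i) (c j)) := by
      intro j hj
      have hdj : d j ≠ 0 := (hd j hj).ne'
      rw [hUbar j hj]
      match_scalars <;> field_simp <;> ring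
    have hterm2 : ∀ j ∈ I.erase i, (τ / m) • (d j • (U j - U i))
        = (τ * d j / m) • U j - (τ * d j / m) • U i := by
      intro j hj
      match_scalars <;> field_simp <;> ring
    rw [hUnew, hFsum, Finset.sum_congr rfl hterm, smul_sub, Finset.smul_sum,
      Finset.smul_sum, Finset.sum_congr rfl hterm2]
    simp only [Finset.sum_sub_distrib, Finset.sum_add_distrib, ← Finset.sum_smul]
    have hS : ∑ j ∈ I.erase i, 2 * τ * d j / m
        = (∑ j ∈ I.erase i, τ * d j / m) + (∑ j ∈ I.erase i, τ * d j / m) := by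
      rw [← Finset.sum_add_distrib]
      exact Finset.sum_congr rfl fun j _ => by ring
    rw [hS]
    module
  · -- coefficient of U i nonneg
    have : ∑ j ∈ I.erase i, 2 * τ * d j / m = τ * ∑ j ∈ I.erase i, 2 * d j / m := by
      rw [Finset.mul_sum]; exact Finset.sum_congr rfl fun j _ => by ring
    rw [this]; linarith
  · intro j hj
    have := hd j hj
    positivity
end
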